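/- Let w be an infinite word over {1,…,d} with complexity p_w(n) = (d−1)n + 1 for all n ≥ 1 and rationally independent letter frequencies. Then w is recurrent: every factor of w occurs infinitely often. -/

import Mathlib

def factorAt {A : Type*} (w : ℕ → A) (i n : ℕ) : List A :=
  (List.range n).map fun k => w (i + k)

def factors {A : Type*} (w : ℕ → A) (n : ℕ) : Set (List A) :=
  {u | ∃ i, u = factorAt w i n}

noncomputable def complexity {A : Type*} (w : ℕ → A) (n : ℕ) : ℕ :=
  (factors w n).ncard

/-- Number of occurrences of the letter `a` among the first `n` letters of `w`. -/
def prefCount {d : ℕ} (w : ℕ → Fin d) (n : ℕ) (a : Fin d) : ℕ :=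
  ((Finset.range n).filter fun i => w i = a).card

open Filter Finset

private lemma factorAt_ofFn {A : Type*} (w : ℕ → A) (i n : ℕ) :
    factorAt w i n = List.ofFn (fun k : Fin n => w (i + k)) := by
  apply List.ext_getElem
  · simp [factorAt]
  · intro k h1 h2
    simp [factorAt]

private noncomputable def facSet {d : ℕ} (v : ℕ → Fin d) (n : ℕ) : Finset (Fin n → Fin d) := by
  classical
  exact Finset.univ.filter (fun g => ∃ i, (fun k : Fin n => v (i + (k : ℕ))) = g)

private lemma factors_eq_image {d : ℕ} (v : ℕ → Fin d) (n : ℕ) :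
    factors v n = List.ofFn '' (facSet v n : Set (Fin n → Fin d)) := by
  ext u
  simp only [factors, Set.mem_setOf_eq, Set.mem_image, facSet, Finset.coe_filter,
    Finset.mem_coe, Set.mem_setOf_eq, Finset.mem_univ, true_and]
  constructor
  · rintro ⟨i, rfl⟩
    exact ⟨fun k => v (i + k), ⟨i, rfl⟩, (factorAt_ofFn v i n).symm⟩
  · rintro ⟨g, ⟨i, rfl⟩, rfl⟩
    exact ⟨i, (factorAt_ofFn v i n).symm⟩

private lemma complexity_eq_card {d : ℕ} (v : ℕ → Fin d) (n : ℕ) :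
    complexity v n = (facSet v n).card := by
  rw [complexity, factors_eq_image, Set.ncard_image_of_injective _ List.ofFn_injective,
    Set.ncard_coe_finset]

private lemma factors_finite {d : ℕ} (v : ℕ → Fin d) (n : ℕ) : (factors v n).Finite := by
  rw [factors_eq_image]; exact (Finset.finite_toSet _).image _

private lemma count_split (P : ℕ → Prop) [DecidablePred P] (N n : ℕ) :
    ((range (N + n)).filter P).card
      = ((range N).filter P).card + ((range n).filter fun i => P (N + i)).card := by
  induction n with
  | zero => simp
  | succ n ih =>
    rw [show N + (n+1) = (N + n) + 1 from rfl, Finset.range_add_one, Finset.range_add_one,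
      Finset.filter_insert, Finset.filter_insert]
    by_cases h : P (N + n) <;> simp [h, ih]
    omega

private lemma count_succ_shift (Q : ℕ → Prop) [DecidablePred Q] (n : ℕ) :
    ((range (n+1)).filter Q).card
      = ((range n).filter fun i => Q (i + 1)).card + (if Q 0 then 1 else 0) := by
  simp only [Finset.card_filter]
  exact Finset.sum_range_succ' _ n

private lemma aux_ratio (N : ℕ) : Tendsto (fun n : ℕ => ((n + N : ℕ) : ℝ)/n) atTop (nhds 1) := by
  have h0 : Tendsto (fun n : ℕ => (N:ℝ)/n + 1) atTop (nhds 1) := by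
    simpa using (tendsto_const_div_atTop_nhds_zero_nat (N:ℝ)).add tendsto_const_nhds
  apply h0.congr'
  filter_upwards [eventually_ge_atTop 1] with n hn
  have hn0 : (n:ℝ) ≠ 0 := Nat.cast_ne_zero.mpr (by omega)
  push_cast
  field_simp
  ring

private lemma freq_shift {d : ℕ} (v : ℕ → Fin d) (a : Fin d) (L : ℝ)
    (hf : Tendsto (fun n => (prefCount v n a : ℝ)/n) atTop (nhds L)) (N : ℕ) :
    Tendsto (fun n => (((range n).filter fun i => v (i + N) = a).card : ℝ)/n)
      atTop (nhds L) := by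
  classical
  have key : ∀ n : ℕ, (((range n).filter fun i => v (i + N) = a).card : ℝ)
      = (prefCount v (n + N) a : ℝ) - prefCount v N a := by
    intro n
    have h := count_split (fun i => v i = a) N n
    have h2 : ((range n).filter fun i => v (N + i) = a)
        = ((range n).filter fun i => v (i + N) = a) := by
      apply Finset.filter_congr; intro i _; rw [Nat.add_comm]
    rw [h2] at h
    rw [Nat.add_comm n N]
    unfold prefCount
    rw [h]; push_cast; ring
  have h2 : Tendsto (fun n => (prefCount v (n + N) a : ℝ)/n) atTop (nhds L) := by
    have h1 : Tendsto (fun n : ℕ =>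
        (prefCount v (n + N) a : ℝ)/((n + N : ℕ):ℝ) * (((n + N : ℕ):ℝ)/n)) atTop (nhds (L * 1)) :=
      Tendsto.mul ((tendsto_add_atTop_iff_nat N).mpr hf) (aux_ratio N)
    rw [mul_one] at h1
    apply h1.congr'
    filter_upwards [eventually_ge_atTop 1] with n hn
    have hn0 : (n:ℝ) ≠ 0 := Nat.cast_ne_zero.mpr (by omega)
    have hn1 : ((n + N : ℕ):ℝ) ≠ 0 := Nat.cast_ne_zero.mpr (by omega)
    push_cast at hn1 ⊢
    field_simp
  have h3 : Tendsto (fun n : ℕ => (prefCount v N a : ℝ)/n) atTop (nhds 0) :=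
    tendsto_const_div_atTop_nhds_zero_nat _
  have := h2.sub h3
  rw [sub_zero] at this
  apply this.congr
  intro n
  rw [key n, sub_div]

private lemma core {d : ℕ} (v : ℕ → Fin d) (m : ℕ) (f : Fin d → ℝ)
    (hf : ∀ a, Tendsto (fun n => (prefCount v n a : ℝ)/n) atTop (nhds (f a)))
    (hc : complexity v (m+1) + 2 ≤ complexity v m + d) :
    ¬ LinearIndependent ℚ f := by
  classical
  set W := (Fin (m+1) → Fin d) with hW
  set fac : ℕ → W := fun i k => v (i + k) with hfacdef
  set facm : ℕ → (Fin m → Fin d) := fun i k => v (i + k) with hfacmdef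
  set E : Finset W := facSet v (m+1) with hE
  set V : Finset (Fin m → Fin d) := facSet v m with hV
  set init : W → (Fin m → Fin d) := fun e k => e k.castSucc with hinitdef
  set tail : W → (Fin m → Fin d) := fun e k => e k.succ with htaildef
  set last : W → Fin d := fun e => e (Fin.last m) with hlastdef
  have hinit : ∀ i, init (fac i) = facm i := by
    intro i; funext k; simp [hinitdef, hfacdef, hfacmdef]
  have htail : ∀ i, tail (fac i) = facm (i+1) := by
    intro i; funext k
    show v (i + (k.1 + 1)) = v (i + 1 + k.1)
    congr 1; omega
  have hlast : ∀ i, last (fac i) = v (i + m) := by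
    intro i; rfl
  have hfacmem : ∀ i, fac i ∈ E := by
    intro i; simp only [hE, facSet, Finset.mem_filter, Finset.mem_univ, true_and]
    exact ⟨i, rfl⟩
  have hfacmmem : ∀ i, facm i ∈ V := by
    intro i; simp only [hV, facSet, Finset.mem_filter, Finset.mem_univ, true_and]
    exact ⟨i, rfl⟩
  have hEmem : ∀ e ∈ E, ∃ i, fac i = e := by
    intro e he; simp only [hE, facSet, Finset.mem_filter, Finset.mem_univ, true_and] at he
    exact he
  have hVmem : ∀ u ∈ V, ∃ i, facm i = u := by
    intro u hu; simp only [hV, facSet, Finset.mem_filter, Finset.mem_univ, true_and] at hu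
    exact hu
  set occ : ℕ → W → ℕ := fun n e => ((range n).filter fun i => fac i = e).card with hoccdef
  -- counting lemma
  have hcount : ∀ (P : W → Prop) (iP : DecidablePred P) (n : ℕ),
      (∑ e ∈ E.filter P, occ n e) = ((range n).filter fun i => P (fac i)).card := by
    intro P iP n
    symm
    rw [Finset.card_eq_sum_card_fiberwise
      (f := fac) (t := E.filter P) (by
        intro i hi
        rw [Finset.mem_coe, Finset.mem_filter] at hi ⊢
        exact ⟨hfacmem i, hi.2⟩)]
    apply Finset.sum_congr rfl
    intro e he
    rw [Finset.mem_filter] at he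
    rw [hoccdef]
    congr 1
    rw [Finset.filter_filter]
    apply Finset.filter_congr
    intro i _
    constructor
    · rintro ⟨_, h⟩; exact h
    · rintro h; exact ⟨by rw [h]; exact he.2, h⟩
  -- compactness: subsequential limits
  set F : ℕ → (W → ℝ) := fun n e => (occ n e : ℝ)/n with hFdef
  have hmem : ∀ n, F n ∈ Set.pi Set.univ (fun _ : W => Set.Icc (0:ℝ) 1) := by
    intro n e _
    constructor
    · positivity
    · apply div_le_one_of_le₀
      · exact_mod_cast (Finset.card_filter_le _ _).trans (Finset.card_range n).le
      · positivity
  obtain ⟨x, -, φ, hφ, hlim⟩ :=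
    (isCompact_univ_pi (fun _ : W => isCompact_Icc)).tendsto_subseq hmem
  have hφtop : Tendsto φ atTop atTop := hφ.tendsto_atTop
  have hxe : ∀ e : W, Tendsto (fun k => (occ (φ k) e : ℝ)/(φ k)) atTop (nhds (x e)) := by
    intro e
    exact tendsto_pi_nhds.mp hlim e
  -- limit of fiber sums
  have hSlim : ∀ (P : W → Prop) (iP : DecidablePred P),
      Tendsto (fun k => (((range (φ k)).filter fun i => P (fac i)).card : ℝ)/(φ k))
        atTop (nhds (∑ e ∈ E.filter P, x e)) := by
    intro P iP
    have : ∀ k, (((range (φ k)).filter fun i => P (fac i)).card : ℝ)/(φ k)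
        = ∑ e ∈ E.filter P, (occ (φ k) e : ℝ)/(φ k) := by
      intro k
      rw [← hcount P iP (φ k)]
      push_cast
      rw [Finset.sum_div]
    rw [funext this]
    exact tendsto_finset_sum _ (fun e _ => hxe e)
  -- the frequency equations
  have eqF : ∀ a : Fin d, (∑ e ∈ E.filter fun e => last e = a, x e) = f a := by
    intro a
    have h1 := hSlim (fun e => last e = a) inferInstance
    have h2 : Tendsto (fun k => (((range (φ k)).filter fun i => v (i + m) = a).card : ℝ)/(φ k))
        atTop (nhds (f a)) := (freq_shift v a (f a) (hf a) m).comp hφtop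
    have h3 : ∀ k, ((range (φ k)).filter fun i => last (fac i) = a)
        = ((range (φ k)).filter fun i => v (i + m) = a) :=
      fun k => Finset.filter_congr (fun i _ => by rw [hlast i])
    simp only [h3] at h1
    exact tendsto_nhds_unique h1 h2
  -- the flow equations
  have eqA : ∀ u ∈ V, (∑ e ∈ E.filter fun e => init e = u, x e)
      = (∑ e ∈ E.filter fun e => tail e = u, x e) := by
    intro u _
    set c1 : ℕ → ℕ := fun n => ((range n).filter fun i => facm i = u).card with hc1
    set c2 : ℕ → ℕ := fun n => ((range n).filter fun i => facm (i+1) = u).card with hc2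
    have hbd : ∀ n, c2 n ≤ c1 n + 1 ∧ c1 n ≤ c2 n + 1 := by
      intro n
      have e1 : c1 (n+1) = c2 n + (if facm 0 = u then 1 else 0) :=
        count_succ_shift (fun i => facm i = u) n
      have e2 : c1 n ≤ c1 (n+1) := by
        apply Finset.card_le_card
        apply Finset.filter_subset_filter
        exact Finset.range_subset_range.mpr (by omega)
      have e3 : c1 (n+1) ≤ c1 n + 1 := by
        rw [hc1]
        simp only [Finset.range_add_one, Finset.filter_insert]
        split
        · exact (Finset.card_insert_le _ _)
        · exact Nat.le_succ_of_le le_rfl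
      split_ifs at e1 <;> omega
    have h1 := hSlim (fun e => init e = u) inferInstance
    have h2 := hSlim (fun e => tail e = u) inferInstance
    have g1 : ∀ k, ((range (φ k)).filter fun i => init (fac i) = u)
        = ((range (φ k)).filter fun i => facm i = u) :=
      fun k => Finset.filter_congr (fun i _ => by rw [hinit i])
    have g2 : ∀ k, ((range (φ k)).filter fun i => tail (fac i) = u)
        = ((range (φ k)).filter fun i => facm (i+1) = u) :=
      fun k => Finset.filter_congr (fun i _ => by rw [htail i])
    have h1' : Tendsto (fun k => (c1 (φ k) : ℝ)/(φ k)) atTop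
        (nhds (∑ e ∈ E.filter fun e => init e = u, x e)) := by
      simp only [g1] at h1; exact h1
    have h2' : Tendsto (fun k => (c2 (φ k) : ℝ)/(φ k)) atTop
        (nhds (∑ e ∈ E.filter fun e => tail e = u, x e)) := by
      simp only [g2] at h2; exact h2
    have hdiff : Tendsto (fun k => (c1 (φ k) : ℝ)/(φ k) - (c2 (φ k) : ℝ)/(φ k))
        atTop (nhds 0) := by
      have hbnd : ∀ k, ‖(c1 (φ k) : ℝ)/(φ k) - (c2 (φ k) : ℝ)/(φ k)‖ ≤ 1/(φ k : ℝ) := by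
        intro k
        rw [div_sub_div_same, Real.norm_eq_abs, abs_div, abs_of_nonneg
          (by positivity : (0:ℝ) ≤ ((φ k : ℕ):ℝ))]
        gcongr
        · obtain ⟨hb1, hb2⟩ := hbd (φ k)
          rw [abs_sub_le_iff]
          constructor <;> [skip; skip] <;>
            · have h1 : ((c1 (φ k) : ℝ)) ≤ (c2 (φ k) : ℝ) + 1 := by exact_mod_cast hb2
              have h2 : ((c2 (φ k) : ℝ)) ≤ (c1 (φ k) : ℝ) + 1 := by exact_mod_cast hb1
              linarith
      have hg : Tendsto (fun k => 1/((φ k : ℕ) : ℝ)) atTop (nhds 0) :=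
        (tendsto_const_div_atTop_nhds_zero_nat 1).comp hφtop
      exact squeeze_zero_norm hbnd hg
    have := h1'.sub hdiff
    rw [sub_zero] at this
    have heq : (fun k => (c1 (φ k) : ℝ)/(φ k) - ((c1 (φ k) : ℝ)/(φ k) - (c2 (φ k) : ℝ)/(φ k)))
        = fun k => (c2 (φ k) : ℝ)/(φ k) := by
      funext k; ring
    rw [heq] at this
    exact tendsto_nhds_unique this h2'
  -- linear algebra part
  set u0 : Fin m → Fin d := facm 0 with hu0def
  have hu0 : u0 ∈ V := hfacmmem 0
  have hvinitmem : ∀ e : {e // e ∈ E}, init e.1 ∈ V := by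
    intro e
    obtain ⟨i, hi⟩ := hEmem e.1 e.2
    rw [← hi, hinit i]; exact hfacmmem i
  have hvtailmem : ∀ e : {e // e ∈ E}, tail e.1 ∈ V := by
    intro e
    obtain ⟨i, hi⟩ := hEmem e.1 e.2
    rw [← hi, htail i]; exact hfacmmem (i+1)
  set vinit : {e // e ∈ E} → {u // u ∈ V} := fun e => ⟨init e.1, hvinitmem e⟩ with hvinitdef
  set vtail : {e // e ∈ E} → {u // u ∈ V} := fun e => ⟨tail e.1, hvtailmem e⟩ with hvtaildef
  set Φ : ((Fin d → ℚ) × ({u // u ∈ V} → ℚ)) →ₗ[ℚ] ({e // e ∈ E} → ℚ) :=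
    { toFun := fun p e => p.1 (last e.1) - (p.2 (vinit e) - p.2 (vtail e)),
      map_add' := by
        intro p r; funext e
        simp only [Prod.fst_add, Prod.snd_add, Pi.add_apply]
        ring,
      map_smul' := by
        intro c p; funext e
        simp only [Prod.smul_fst, Prod.smul_snd, Pi.smul_apply, smul_eq_mul,
          RingHom.id_apply]
        ring } with hPhidef
  have hPhiapp : ∀ p e, Φ p e = p.1 (last e.1) - (p.2 (vinit e) - p.2 (vtail e)) := by
    intro p e; rfl
  have hrank : 2 ≤ Module.finrank ℚ (LinearMap.ker Φ) := by
    have h1 := Φ.finrank_range_add_finrank_ker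
    have h2 : Module.finrank ℚ ((Fin d → ℚ) × ({u // u ∈ V} → ℚ)) = d + V.card := by
      rw [Module.finrank_prod, Module.finrank_pi, Module.finrank_pi, Fintype.card_fin,
        Fintype.card_coe]
    have h3 : Module.finrank ℚ (LinearMap.range Φ) ≤ E.card := by
      have h4 := Submodule.finrank_le (LinearMap.range Φ)
      rwa [Module.finrank_pi, Fintype.card_coe] at h4
    have h4 : E.card = complexity v (m+1) := (complexity_eq_card v (m+1)).symm
    have h5 : V.card = complexity v m := (complexity_eq_card v m).symm
    omega
  have hconn : ∀ z : {u // u ∈ V} → ℚ, (∀ e, z (vinit e) = z (vtail e)) →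
      z ⟨u0, hu0⟩ = 0 → z = 0 := by
    intro z hz h0
    have key : ∀ i : ℕ, z ⟨facm i, hfacmmem i⟩ = 0 := by
      intro i
      induction i with
      | zero => exact h0
      | succ i ih =>
        have h := hz ⟨fac i, hfacmem i⟩
        have e1 : vinit ⟨fac i, hfacmem i⟩ = ⟨facm i, hfacmmem i⟩ := Subtype.ext (hinit i)
        have e2 : vtail ⟨fac i, hfacmem i⟩ = ⟨facm (i+1), hfacmmem (i+1)⟩ :=
          Subtype.ext (htail i)
        rw [e1, e2] at h
        rw [← h]; exact ih
    funext u
    show z u = 0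
    obtain ⟨i, hi⟩ := hVmem u.1 u.2
    have he : (⟨facm i, hfacmmem i⟩ : {u // u ∈ V}) = u := Subtype.ext hi
    rw [← he]
    exact key i
  have hex : ∃ p : (Fin d → ℚ) × ({u // u ∈ V} → ℚ), Φ p = 0 ∧ p.1 ≠ 0 := by
    by_contra hcon
    push_neg at hcon
    set ψ : LinearMap.ker Φ →ₗ[ℚ] ℚ :=
      (LinearMap.proj (⟨u0, hu0⟩ : {u // u ∈ V})).comp
        ((LinearMap.snd ℚ (Fin d → ℚ) ({u // u ∈ V} → ℚ)).comp (LinearMap.ker Φ).subtype)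
      with hψdef
    have hinj : Function.Injective ψ := by
      rw [← LinearMap.ker_eq_bot, Submodule.eq_bot_iff]
      intro p hp
      have hψp : p.1.2 ⟨u0, hu0⟩ = 0 := LinearMap.mem_ker.mp hp
      have hΦ0 : Φ p.1 = 0 := LinearMap.mem_ker.mp p.2
      have hq0 : p.1.1 = 0 := hcon p.1 hΦ0
      have hz : ∀ e, p.1.2 (vinit e) = p.1.2 (vtail e) := by
        intro e
        have h := congrFun hΦ0 e
        rw [hPhiapp] at h
        rw [hq0] at h
        simp only [Pi.zero_apply] at h
        linarith
      have hz2 : p.1.2 = 0 := hconn _ hz hψp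
      apply Subtype.ext
      have : p.1 = (0, 0) := by
        rw [Prod.ext_iff]
        exact ⟨hq0, hz2⟩
      rw [this]; rfl
    have hle := LinearMap.finrank_le_finrank_of_injective hinj
    rw [Module.finrank_self] at hle
    omega
  obtain ⟨⟨q, z⟩, hker, hq⟩ := hex
  have hrel : ∀ e : {e // e ∈ E}, q (last e.1) = z (vinit e) - z (vtail e) := by
    intro e
    have h := congrFun hker e
    rw [hPhiapp] at h
    simp only [Pi.zero_apply] at h
    linarith
  -- final computation
  set Sinit : {u // u ∈ V} → ℝ := fun u => ∑ e ∈ E.filter fun e => init e = u.1, x e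
    with hSinitdef
  set Stail : {u // u ∈ V} → ℝ := fun u => ∑ e ∈ E.filter fun e => tail e = u.1, x e
    with hStaildef
  have hsum : (∑ a, q a • f a) = 0 := by
    have hstep1 : (∑ a, q a • f a)
        = ∑ a, (q a : ℝ) * (∑ e ∈ E.filter fun e => last e = a, x e) := by
      apply Finset.sum_congr rfl
      intro a _
      rw [eqF a, Rat.smul_def]
    have hstep2 : (∑ a, (q a : ℝ) * (∑ e ∈ E.filter fun e => last e = a, x e))
        = ∑ e ∈ E, (q (last e) : ℝ) * x e := by
      have h1 : ∀ a : Fin d, (q a : ℝ) * (∑ e ∈ E.filter fun e => last e = a, x e)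
          = ∑ e ∈ E, if last e = a then (q a : ℝ) * x e else 0 := by
        intro a
        rw [Finset.mul_sum, Finset.sum_filter]
      rw [Finset.sum_congr rfl fun a _ => h1 a, Finset.sum_comm]
      apply Finset.sum_congr rfl
      intro e _
      rw [Finset.sum_ite_eq]
      simp
    have hstep3 : (∑ e ∈ E, (q (last e) : ℝ) * x e)
        = ∑ e ∈ E.attach, ((z (vinit e) : ℝ) - (z (vtail e) : ℝ)) * x e.1 := by
      rw [← Finset.sum_attach E (fun w => (q (last w) : ℝ) * x w)]
      apply Finset.sum_congr rfl
      intro e _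
      congr 1
      have := hrel e
      push_cast [this]
      ring
    have hfib : ∀ (g : {u // u ∈ V} → ℚ) (sel : {e // e ∈ E} → {u // u ∈ V})
        (T : {u // u ∈ V} → ℝ),
        (∀ u : {u // u ∈ V}, (∑ e ∈ E.attach, if sel e = u then x e.1 else 0) = T u) →
        (∑ e ∈ E.attach, (g (sel e) : ℝ) * x e.1) = ∑ u, (g u : ℝ) * T u := by
      intro g sel T hT
      have h1 : ∀ e : {e // e ∈ E}, (g (sel e) : ℝ) * x e.1
          = ∑ u, if sel e = u then (g u : ℝ) * x e.1 else 0 := by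
        intro e
        rw [Finset.sum_ite_eq]
        simp
      rw [Finset.sum_congr rfl fun e _ => h1 e, Finset.sum_comm]
      apply Finset.sum_congr rfl
      intro u _
      rw [← hT u, Finset.mul_sum]
      apply Finset.sum_congr rfl
      intro e _
      split <;> simp
    have hTinit : ∀ u : {u // u ∈ V},
        (∑ e ∈ E.attach, if vinit e = u then x e.1 else 0) = Sinit u := by
      intro u
      have h1 : ∀ e : {e // e ∈ E}, (if vinit e = u then x e.1 else 0)
          = if init e.1 = u.1 then x e.1 else 0 := by
        intro e
        refine if_congr ?_ rfl rfl
        rw [hvinitdef]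
        exact Subtype.ext_iff
      rw [Finset.sum_congr rfl fun e _ => h1 e,
        Finset.sum_attach E (fun w => if init w = u.1 then x w else 0)]
      exact (Finset.sum_filter _ _).symm
    have hTtail : ∀ u : {u // u ∈ V},
        (∑ e ∈ E.attach, if vtail e = u then x e.1 else 0) = Stail u := by
      intro u
      have h1 : ∀ e : {e // e ∈ E}, (if vtail e = u then x e.1 else 0)
          = if tail e.1 = u.1 then x e.1 else 0 := by
        intro e
        refine if_congr ?_ rfl rfl
        rw [hvtaildef]
        exact Subtype.ext_iff
      rw [Finset.sum_congr rfl fun e _ => h1 e,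
        Finset.sum_attach E (fun w => if tail w = u.1 then x w else 0)]
      exact (Finset.sum_filter _ _).symm
    have hstep4 : (∑ e ∈ E.attach, ((z (vinit e) : ℝ) - (z (vtail e) : ℝ)) * x e.1)
        = (∑ u, (z u : ℝ) * Sinit u) - ∑ u, (z u : ℝ) * Stail u := by
      rw [← hfib z vinit Sinit hTinit, ← hfib z vtail Stail hTtail,
        ← Finset.sum_sub_distrib]
      apply Finset.sum_congr rfl
      intro e _
      ring
    have hstep5 : (∑ u : {u // u ∈ V}, (z u : ℝ) * Sinit u)
        = ∑ u : {u // u ∈ V}, (z u : ℝ) * Stail u := by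
      apply Finset.sum_congr rfl
      intro u _
      congr 1
      exact eqA u.1 u.2
    rw [hstep1, hstep2, hstep3, hstep4, hstep5, sub_self]
  intro hli
  have hall := Fintype.linearIndependent_iff.mp hli q hsum
  exact hq (funext hall)

theorem stmt18 (d : ℕ) (w : ℕ → Fin d) (hall : complexity w 1 = d)
    (hp : ∀ n, 1 ≤ n → complexity w n = (d - 1) * n + 1)
    (f : Fin d → ℝ)
    (hf : ∀ a, Filter.Tendsto (fun n => (prefCount w n a : ℝ) / n)
      Filter.atTop (nhds (f a)))
    (hind : LinearIndependent ℚ f) :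
    ∀ n, ∀ u ∈ factors w n, {i : ℕ | factorAt w i n = u}.Infinite := by
  classical
  intro n u hu
  rcases Nat.eq_zero_or_pos n with rfl | hn
  · have hu0 : u = [] := by obtain ⟨i, rfl⟩ := hu; rfl
    have h : {i : ℕ | factorAt w i 0 = u} = Set.univ := by
      ext i; simp [factorAt, hu0]
    rw [h]; exact Set.infinite_univ
  by_contra hfin
  rw [Set.not_infinite] at hfin
  obtain ⟨d', rfl⟩ : ∃ d', d = d' + 1 := by
    cases d with
    | zero => exact (w 0).elim0
    | succ d' => exact ⟨d', rfl⟩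
  obtain ⟨N, hN⟩ : ∃ N, ∀ i, N ≤ i → factorAt w i n ≠ u := by
    obtain ⟨b, hb⟩ := hfin.bddAbove
    refine ⟨b+1, fun i hi hcon => ?_⟩
    have := hb hcon
    omega
  set w' : ℕ → Fin (d'+1) := fun i => w (i + N) with hw'def
  have hfa : ∀ i k, factorAt w' i k = factorAt w (i + N) k := by
    intro i k
    simp only [hw'def, factorAt]
    congr 1
    funext j
    congr 1
    omega
  have hsubset : factors w' n ⊆ factors w n := by
    rintro s ⟨i, rfl⟩
    exact ⟨i + N, by rw [hfa]⟩
  have hnot : u ∉ factors w' n := by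
    rintro ⟨i, hi⟩
    exact hN (i + N) (by omega) (by rw [← hfa]; exact hi.symm)
  have hfin_w : (factors w n).Finite := factors_finite w n
  have hple : complexity w' n ≤ d' * n := by
    have h1 : factors w' n ⊆ factors w n \ {u} := by
      intro s hs
      refine ⟨hsubset hs, ?_⟩
      intro hsu
      rw [Set.mem_singleton_iff] at hsu
      exact hnot (hsu ▸ hs)
    have h2 : (factors w n \ {u}).ncard = complexity w n - 1 := by
      rw [complexity]
      exact Set.ncard_diff_singleton_of_mem hu
    have h3 := Set.ncard_le_ncard h1 (hfin_w.diff (t := {u}))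
    have h4 : complexity w n = d' * n + 1 := by simpa using hp n hn
    have h5 : complexity w' n = (factors w' n).ncard := rfl
    omega
  have hfreq' : ∀ a, Tendsto (fun k => (prefCount w' k a : ℝ)/k) atTop (nhds (f a)) := by
    intro a
    exact freq_shift w a (f a) (hf a) N
  have hp0 : complexity w' 0 = 1 := by
    have h : factors w' 0 = {([] : List (Fin (d'+1)))} := by
      ext s; simp [factors, factorAt]
    rw [complexity, h, Set.ncard_singleton]
  have hex : ∃ m, complexity w' (m+1) + 2 ≤ complexity w' m + (d'+1) := by
    by_contra hcon
    push_neg at hcon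
    have hgrow : ∀ k, d' * k + 1 ≤ complexity w' k := by
      intro k
      induction k with
      | zero => omega
      | succ k ih =>
        have h6 := hcon k
        have h7 : d' * (k+1) = d' * k + d' := by ring
        omega
    have h8 := hgrow n
    omega
  obtain ⟨m, hm⟩ := hex
  exact core w' m f hfreq' hm hind
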